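/- Let A : [0,∞) → ℝ be continuous and define g_{2,A}(T,T) = (σ_A²(T) - m_{2,A}(T))/m_{1,A}(T), where m_{1,A}(T) = exp(∫_0^T A), m_{2,A}(T) = ∫_0^T exp(∫_s^T A)ds, σ_A²(T) = ∫_0^T exp(2∫_s^T A)ds. Then T ↦ g_{2,A}(T,T) is differentiable with d/dT g_{2,A}(T,T) = A(T)σ_A²(T)/m_{1,A}(T). In particular, if A ≥ 0 then g_{2,A}(T,T) is non-negative and non-decreasing in T. -/

import Mathlib

noncomputable def m1 (A : ℝ → ℝ) (s T : ℝ) : ℝ := Real.exp (∫ u in s..T, A u)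

noncomputable def m2 (A : ℝ → ℝ) (s T : ℝ) : ℝ :=
  ∫ u in s..T, Real.exp (∫ v in u..T, A v)

noncomputable def sig2 (A : ℝ → ℝ) (s T : ℝ) : ℝ :=
  ∫ u in s..T, Real.exp (2 * ∫ v in u..T, A v)

/-- `g_{2,A}(T,T) = (σ_A²(T) - m_{2,A}(T))/m_{1,A}(T)`. -/
noncomputable def g2TT (A : ℝ → ℝ) (T : ℝ) : ℝ :=
  (sig2 A 0 T - m2 A 0 T) / m1 A 0 T

noncomputable def Faux (A : ℝ → ℝ) (t : ℝ) : ℝ := ∫ u in (0:ℝ)..t, A u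
noncomputable def Gaux (A : ℝ → ℝ) (t : ℝ) : ℝ :=
  ∫ u in (0:ℝ)..t, Real.exp (-(2 * Faux A u))
noncomputable def Haux (A : ℝ → ℝ) (t : ℝ) : ℝ :=
  ∫ u in (0:ℝ)..t, Real.exp (-(Faux A u))

section aux
variable (A : ℝ → ℝ)

lemma hFd (hA : Continuous A) : ∀ t, HasDerivAt (Faux A) (A t) t := fun t =>
  intervalIntegral.integral_hasDerivAt_right (hA.intervalIntegrable 0 t)
    (hA.stronglyMeasurableAtFilter _ _) hA.continuousAt

lemma hFc (hA : Continuous A) : Continuous (Faux A) :=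
  continuous_iff_continuousAt.2 fun t => ((hFd A hA) t).continuousAt

lemma hsub (hA : Continuous A) : ∀ u T : ℝ, (∫ v in u..T, A v) = Faux A T - Faux A u := fun u T =>
  (intervalIntegral.integral_interval_sub_left (hA.intervalIntegrable 0 T)
    (hA.intervalIntegrable 0 u)).symm

lemma hGd (hA : Continuous A) : ∀ t, HasDerivAt (Gaux A) (Real.exp (-(2 * Faux A t))) t := fun t =>
  intervalIntegral.integral_hasDerivAt_right
    (((continuous_const.mul (hFc A hA)).neg.rexp).intervalIntegrable 0 t)
    (((continuous_const.mul (hFc A hA)).neg.rexp).stronglyMeasurableAtFilter _ _)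
    ((continuous_const.mul (hFc A hA)).neg.rexp).continuousAt

lemma hHd (hA : Continuous A) : ∀ t, HasDerivAt (Haux A) (Real.exp (-(Faux A t))) t := fun t =>
  intervalIntegral.integral_hasDerivAt_right
    (((hFc A hA).neg.rexp).intervalIntegrable 0 t)
    (((hFc A hA).neg.rexp).stronglyMeasurableAtFilter _ _)
    ((hFc A hA).neg.rexp).continuousAt

lemma sig2_eq (hA : Continuous A) : ∀ T, sig2 A 0 T = Real.exp (2 * Faux A T) * Gaux A T := by
  intro T
  unfold sig2 Gaux
  rw [← intervalIntegral.integral_const_mul]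
  apply intervalIntegral.integral_congr
  intro u hu
  simp only
  rw [hsub A hA, ← Real.exp_add]
  congr 1
  ring

lemma m2_eq (hA : Continuous A) : ∀ T, m2 A 0 T = Real.exp (Faux A T) * Haux A T := by
  intro T
  unfold m2 Haux
  rw [← intervalIntegral.integral_const_mul]
  apply intervalIntegral.integral_congr
  intro u hu
  simp only
  rw [hsub A hA, ← Real.exp_add]
  congr 1

lemma g2_eq (hA : Continuous A) : ∀ T, g2TT A T = Real.exp (Faux A T) * Gaux A T - Haux A T := by
  intro T
  unfold g2TT m1
  rw [sig2_eq A hA, m2_eq A hA]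
  have h1 : (∫ u in (0:ℝ)..T, A u) = Faux A T := rfl
  rw [h1, two_mul, Real.exp_add]
  field_simp

lemma g2_deriv (hA : Continuous A) : ∀ T, HasDerivAt (g2TT A) (A T * (Real.exp (Faux A T) * Gaux A T)) T := by
  intro T
  have h1 : HasDerivAt (fun t => Real.exp (Faux A t)) (Real.exp (Faux A T) * A T) T :=
    (hFd A hA T).exp
  have h2 : HasDerivAt (fun t => Real.exp (Faux A t) * Gaux A t - Haux A t) _ T := (h1.mul (hGd A hA T)).sub (hHd A hA T)
  have hfun : (fun t => Real.exp (Faux A t) * Gaux A t - Haux A t) = g2TT A := by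
    funext t; rw [g2_eq A hA]
  rw [hfun] at h2
  convert h2 using 1
  have he : Real.exp (Faux A T) * Real.exp (-(2 * Faux A T)) = Real.exp (-(Faux A T)) := by
    rw [← Real.exp_add]; congr 1; ring
  nlinarith [he]

end aux

theorem stmt_8 (A : ℝ → ℝ) (hA : Continuous A) :
    (∀ T > (0:ℝ), HasDerivAt (g2TT A) (A T * sig2 A 0 T / m1 A 0 T) T) ∧
    ((∀ t, 0 ≤ A t) →
      (∀ T > (0:ℝ), 0 ≤ g2TT A T) ∧ MonotoneOn (g2TT A) (Set.Ioi 0)) := by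
  have hratio : ∀ T : ℝ, A T * sig2 A 0 T / m1 A 0 T
      = A T * (Real.exp (Faux A T) * Gaux A T) := by
    intro T
    rw [sig2_eq A hA]
    unfold m1
    have h1 : (∫ u in (0:ℝ)..T, A u) = Faux A T := rfl
    rw [h1, two_mul, Real.exp_add]
    field_simp
  constructor
  · intro T _
    rw [hratio T]
    exact g2_deriv A hA T
  · intro hAnn
    have hdiff : ∀ T : ℝ, HasDerivAt (g2TT A) (A T * (Real.exp (Faux A T) * Gaux A T)) T :=
      g2_deriv A hA
    have hcont : ContinuousOn (g2TT A) (Set.Ici 0) :=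
      fun t _ => ((hdiff t).continuousAt).continuousWithinAt
    have hmono : MonotoneOn (g2TT A) (Set.Ici 0) := by
      apply monotoneOn_of_deriv_nonneg (convex_Ici 0) hcont
      · intro t ht
        rw [interior_Ici] at ht
        exact ((hdiff t).differentiableAt).differentiableWithinAt
      · intro t ht
        rw [interior_Ici] at ht
        rw [(hdiff t).deriv]
        have hG : 0 ≤ Gaux A t := by
          apply intervalIntegral.integral_nonneg (le_of_lt ht)
          intro u _
          positivity
        have := Real.exp_pos (Faux A t)
        have := hAnn t
        positivity
    have h0 : g2TT A 0 = 0 := by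
      simp [g2TT, sig2, m2, m1]
    constructor
    · intro T hT
      have := hmono (Set.self_mem_Ici) (le_of_lt hT) (le_of_lt hT)
      rw [h0] at this
      exact this
    · exact hmono.mono Set.Ioi_subset_Ici_self
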